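/- Let μ be a locally finite positive Borel measure on ℝ and M_μ the dyadic maximal function M_μ f(x) = sup over dyadic intervals I containing x of (1/μ(I))∫_I |f| dμ. Then for every weight w ≥ 0 and 1 < q < ∞, there is a constant C_q such that ∫ (M_μ f)^q w dμ ≤ C_q ∫ |f|^q (M_μ w) dμ. -/

import Mathlib

open MeasureTheory Set
open scoped ENNReal NNReal

/-- The dyadic interval `[k·2ⁿ, (k+1)·2ⁿ)`. -/
def dyadicInterval (n k : ℤ) : Set ℝ :=
  Set.Ico ((k : ℝ) * 2 ^ n) (((k : ℝ) + 1) * 2 ^ n)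

/-- The dyadic maximal function with respect to the measure `μ`:
`M_μ f(x) = sup { μ(I)⁻¹ ∫_I f dμ : I dyadic, x ∈ I }`. -/
noncomputable def dyadicMaximal (μ : Measure ℝ) (f : ℝ → ℝ≥0∞) (x : ℝ) : ℝ≥0∞ :=
  ⨆ (n : ℤ) (k : ℤ) (_ : x ∈ dyadicInterval n k),
    (μ (dyadicInterval n k))⁻¹ * ∫⁻ y in dyadicInterval n k, f y ∂μ

set_option linter.unusedVariables false
set_option linter.unusedSectionVars false
set_option maxHeartbeats 1000000

namespace FS
lemma measurableSet_dyadic (n k : ℤ) : MeasurableSet (dyadicInterval n k) :=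
  measurableSet_Ico

lemma two_zpow_pos (n : ℤ) : (0:ℝ) < 2 ^ n := zpow_pos (by norm_num) n

lemma mem_dyadic_iff {x : ℝ} {n k : ℤ} :
    x ∈ dyadicInterval n k ↔ k = ⌊x / 2 ^ n⌋ := by
  have h2 : (0:ℝ) < 2 ^ n := two_zpow_pos n
  rw [dyadicInterval, Set.mem_Ico, eq_comm, Int.floor_eq_iff, le_div_iff₀ h2, div_lt_iff₀ h2]

lemma mem_dyadic_self (n : ℤ) (x : ℝ) : x ∈ dyadicInterval n ⌊x / 2 ^ n⌋ :=
  mem_dyadic_iff.mpr rfl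

lemma floor_const {n m k : ℤ} (hnm : n ≤ m) {x y : ℝ}
    (hx : x ∈ dyadicInterval n k) (hy : y ∈ dyadicInterval n k) :
    ⌊x / 2 ^ m⌋ = ⌊y / 2 ^ m⌋ := by
  have h2n : (0:ℝ) < 2 ^ n := two_zpow_pos n
  have h2m : (0:ℝ) < 2 ^ m := two_zpow_pos m
  set e : ℤ := 2 ^ (m - n).toNat with he
  have hem : (2:ℝ) ^ m = (e:ℝ) * 2 ^ n := by
    rw [he]
    push_cast
    rw [← zpow_natCast (2:ℝ) (m-n).toNat, Int.toNat_of_nonneg (by omega), ← zpow_add₀ (by norm_num : (2:ℝ) ≠ 0)]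
    ring_nf
  set c : ℤ := ⌊x / 2 ^ m⌋ with hc
  obtain ⟨hx1, hx2⟩ := hx
  obtain ⟨hy1, hy2⟩ := hy
  have hc1 : (c:ℝ) * 2 ^ m ≤ x := by
    rw [hc, ← le_div_iff₀ h2m]; exact Int.floor_le _
  have hc2 : x < ((c:ℝ) + 1) * 2 ^ m := by
    rw [hc, ← div_lt_iff₀ h2m]; push_cast; exact Int.lt_floor_add_one _
  -- c * e ≤ k
  have h1 : (c * e : ℤ) ≤ k := by
    have : ((c : ℝ) * e) * 2 ^ n < ((k:ℝ) + 1) * 2 ^ n := by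
      calc ((c : ℝ) * e) * 2 ^ n = (c:ℝ) * 2 ^ m := by rw [hem]; ring
        _ ≤ x := hc1
        _ < ((k:ℝ) + 1) * 2 ^ n := hx2
    have := (mul_lt_mul_iff_of_pos_right h2n).mp this
    exact_mod_cast Int.lt_add_one_iff.mp (by exact_mod_cast this)
  have h2 : (k + 1 : ℤ) ≤ (c + 1) * e := by
    have : (k:ℝ) * 2 ^ n < ((c:ℝ) + 1) * e * 2 ^ n := by
      calc (k:ℝ) * 2 ^ n ≤ x := hx1
        _ < ((c:ℝ) + 1) * 2 ^ m := hc2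
        _ = ((c:ℝ) + 1) * e * 2 ^ n := by rw [hem]; ring
    have := (mul_lt_mul_iff_of_pos_right h2n).mp this
    have : (k : ℤ) < (c + 1) * e := by exact_mod_cast this
    omega
  symm
  rw [Int.floor_eq_iff]
  constructor
  · rw [le_div_iff₀ h2m]
    calc (c:ℝ) * 2 ^ m = ((c*e : ℤ) : ℝ) * 2 ^ n := by push_cast; rw [hem]; ring
      _ ≤ (k:ℝ) * 2 ^ n := by
          have : ((c*e:ℤ):ℝ) ≤ (k:ℝ) := by exact_mod_cast h1
          nlinarith
      _ ≤ y := hy1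
  · rw [div_lt_iff₀ h2m]
    calc y < ((k:ℝ) + 1) * 2 ^ n := hy2
      _ ≤ (((c+1)*e : ℤ):ℝ) * 2 ^ n := by
          have : ((k:ℝ) + 1) ≤ (((c+1)*e:ℤ):ℝ) := by exact_mod_cast h2
          nlinarith
      _ = ((c:ℝ) + 1) * 2 ^ m := by push_cast; rw [hem]; ring

lemma dyadic_subset {n m k j : ℤ} (hnm : n ≤ m)
    (h : (dyadicInterval n k ∩ dyadicInterval m j).Nonempty) :
    dyadicInterval n k ⊆ dyadicInterval m j := by
  obtain ⟨x, hxk, hxj⟩ := h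
  intro y hy
  rw [mem_dyadic_iff] at hxj ⊢
  rw [hxj]
  exact floor_const hnm hxk hy

lemma dyadic_disjoint_same {n k j : ℤ} (h : k ≠ j) :
    Disjoint (dyadicInterval n k) (dyadicInterval n j) := by
  rw [Set.disjoint_left]
  intro x hk hj
  rw [mem_dyadic_iff] at hk hj
  exact h (hk.trans hj.symm)


section
variable (μ : Measure ℝ) (f : ℝ → ℝ≥0∞)

/-- average of `f` on the dyadic interval. -/
noncomputable def avg (μ : Measure ℝ) (f : ℝ → ℝ≥0∞) (n k : ℤ) : ℝ≥0∞ :=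
  (μ (dyadicInterval n k))⁻¹ * ∫⁻ y in dyadicInterval n k, f y ∂μ

lemma dyadicMaximal_eq (x : ℝ) :
    dyadicMaximal μ f x = ⨆ (n : ℤ) (k : ℤ) (_ : x ∈ dyadicInterval n k), avg μ f n k := rfl

lemma measure_dyadic_ne_top [IsLocallyFiniteMeasure μ] (n k : ℤ) :
    μ (dyadicInterval n k) ≠ ⊤ := by
  have : μ (dyadicInterval n k) ≤ μ (Set.Icc ((k : ℝ) * 2 ^ n) (((k : ℝ) + 1) * 2 ^ n)) :=
    measure_mono Set.Ico_subset_Icc_self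
  exact ne_top_of_le_ne_top (IsCompact.measure_ne_top isCompact_Icc) this

lemma measurable_dyadicMaximal :
    Measurable (dyadicMaximal μ f) := by
  apply Measurable.iSup; intro n
  apply Measurable.iSup; intro k
  have : (fun x => ⨆ (_ : x ∈ dyadicInterval n k), avg μ f n k)
      = (dyadicInterval n k).indicator (fun _ => avg μ f n k) := by
    funext x
    by_cases h : x ∈ dyadicInterval n k
    · rw [iSup_pos h, Set.indicator_of_mem h]
    · rw [iSup_neg h, Set.indicator_of_notMem h]; rfl
  rw [show (fun x => ⨆ (_ : x ∈ dyadicInterval n k),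
      (μ (dyadicInterval n k))⁻¹ * ∫⁻ y in dyadicInterval n k, f y ∂μ)
      = (fun x => ⨆ (_ : x ∈ dyadicInterval n k), avg μ f n k) from rfl, this]
  exact Measurable.indicator measurable_const (measurableSet_dyadic n k)

lemma avg_le_dyadicMaximal {x : ℝ} {n k : ℤ} (hx : x ∈ dyadicInterval n k) :
    avg μ f n k ≤ dyadicMaximal μ f x := by
  rw [dyadicMaximal_eq]
  exact le_iSup_of_le n (le_iSup_of_le k (le_iSup_of_le hx le_rfl))

lemma lt_dyadicMaximal_iff {x : ℝ} {c : ℝ≥0∞} :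
    c < dyadicMaximal μ f x ↔ ∃ n k, x ∈ dyadicInterval n k ∧ c < avg μ f n k := by
  rw [dyadicMaximal_eq]
  simp only [lt_iSup_iff]
  constructor
  · rintro ⟨n, k, h, hc⟩; exact ⟨n, k, h, hc⟩
  · rintro ⟨n, k, h, hc⟩; exact ⟨n, k, h, hc⟩

end

section
variable (μ : Measure ℝ) [IsLocallyFiniteMeasure μ] (w f : ℝ → ℝ≥0∞)
  (hw : Measurable w) (hf : Measurable f) (lam : ℝ≥0∞)

lemma left_mem_dyadic (n k : ℤ) : ((k:ℝ) * 2 ^ n) ∈ dyadicInterval n k := by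
  exact ⟨le_refl _, by nlinarith [two_zpow_pos n]⟩

/-- Per-interval estimate. -/
lemma key_interval (hf : Measurable f) {n k : ℤ} (h : lam < avg μ f n k) :
    lam * ∫⁻ x in dyadicInterval n k, w x ∂μ
      ≤ ∫⁻ x in dyadicInterval n k, f x * dyadicMaximal μ w x ∂μ := by
  set I := dyadicInterval n k
  have h1 : ∀ x ∈ I, f x * ((μ I)⁻¹ * ∫⁻ y in I, w y ∂μ) ≤ f x * dyadicMaximal μ w x := by
    intro x hx
    exact mul_le_mul_right (avg_le_dyadicMaximal μ w hx) _
  calc lam * ∫⁻ x in I, w x ∂μ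
      ≤ avg μ f n k * ∫⁻ x in I, w x ∂μ := mul_le_mul_left h.le _
    _ = ((μ I)⁻¹ * ∫⁻ y in I, w y ∂μ) * ∫⁻ x in I, f x ∂μ := by
        rw [avg]; ring
    _ = ∫⁻ x in I, f x * ((μ I)⁻¹ * ∫⁻ y in I, w y ∂μ) ∂μ := by
        rw [lintegral_mul_const _ hf, mul_comm]
    _ ≤ ∫⁻ x in I, f x * dyadicMaximal μ w x ∂μ :=
        setLIntegral_mono (hf.mul (measurable_dyadicMaximal μ w)) h1

/-- the λ-superlevel set truncated at generation N. -/
def Eset (N : ℤ) : Set ℝ :=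
  ⋃ (n : ℤ) (k : ℤ) (_ : n ≤ N ∧ lam < avg μ f n k), dyadicInterval n k

/-- selected maximal dyadic intervals at generations ≤ N. -/
def Sel (N : ℤ) : Set (ℤ × ℤ) :=
  {p | p.1 ≤ N ∧ lam < avg μ f p.1 p.2 ∧
    ∀ m, p.1 < m → m ≤ N → avg μ f m ⌊(p.2 : ℝ) * 2 ^ p.1 / 2 ^ m⌋ ≤ lam}

lemma measurableSet_Eset (N : ℤ) : MeasurableSet (Eset μ f lam N) :=
  MeasurableSet.iUnion fun n => MeasurableSet.iUnion fun k =>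
    MeasurableSet.iUnion fun _ => measurableSet_dyadic n k

lemma Eset_eq_biUnion_sel (N : ℤ) :
    Eset μ f lam N = ⋃ p ∈ Sel μ f lam N, dyadicInterval p.1 p.2 := by
  apply Set.Subset.antisymm
  · intro x hx
    simp only [Eset, Set.mem_iUnion] at hx
    obtain ⟨n, k, ⟨hnN, havg⟩, hxI⟩ := hx
    -- the set of generations m ≤ N whose dyadic interval containing x has large average
    have hex : ∃ m : ℤ, m ≤ N ∧ lam < avg μ f m ⌊x / 2 ^ m⌋ := by
      refine ⟨n, hnN, ?_⟩
      rwa [← (mem_dyadic_iff.mp hxI)]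
    obtain ⟨n', ⟨hn'N, hn'avg⟩, hn'max⟩ :=
      Int.exists_greatest_of_bdd (P := fun m => m ≤ N ∧ lam < avg μ f m ⌊x / 2 ^ m⌋)
        ⟨N, fun z hz => hz.1⟩ hex
    refine Set.mem_biUnion (show (n', ⌊x / 2 ^ n'⌋) ∈ Sel μ f lam N from ?_) ?_
    · refine ⟨hn'N, hn'avg, fun m hm1 hm2 => ?_⟩
      by_contra hcon
      push_neg at hcon
      have hxmem : x ∈ dyadicInterval n' ⌊x / 2 ^ n'⌋ := mem_dyadic_iff.mpr rfl
      have hfl : ⌊(⌊x / 2 ^ n'⌋ : ℝ) * 2 ^ n' / 2 ^ m⌋ = ⌊x / 2 ^ m⌋ :=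
        floor_const hm1.le (left_mem_dyadic n' _) hxmem
      rw [hfl] at hcon
      have := hn'max m ⟨hm2, hcon⟩
      omega
    · exact mem_dyadic_iff.mpr rfl
  · intro x hx
    simp only [Set.mem_iUnion] at hx
    obtain ⟨p, hp, hxI⟩ := hx
    simp only [Eset, Set.mem_iUnion]
    exact ⟨p.1, p.2, ⟨hp.1, hp.2.1⟩, hxI⟩

lemma sel_pairwiseDisjoint (N : ℤ) :
    (Sel μ f lam N).PairwiseDisjoint (fun p : ℤ × ℤ => dyadicInterval p.1 p.2) := by
  have main : ∀ p ∈ Sel μ f lam N, ∀ q ∈ Sel μ f lam N, p ≠ q → p.1 ≤ q.1 →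
      Disjoint (dyadicInterval p.1 p.2) (dyadicInterval q.1 q.2) := by
    rintro ⟨n, k⟩ hp ⟨m, j⟩ hq hne hle
    rcases eq_or_lt_of_le hle with heq | hlt
    · simp only at heq
      subst heq
      have : k ≠ j := by
        intro h; exact hne (by simp [h])
      exact dyadic_disjoint_same this
    · rw [Set.disjoint_left]
      intro x hxp hxq
      have h1 : (j : ℤ) = ⌊x / 2 ^ m⌋ := mem_dyadic_iff.mp hxq
      have h2 : ⌊(k : ℝ) * 2 ^ n / 2 ^ m⌋ = ⌊x / 2 ^ m⌋ :=
        floor_const hlt.le (left_mem_dyadic n k) hxp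
      have h3 := hp.2.2 m hlt hq.1
      rw [h2, ← h1] at h3
      exact absurd hq.2.1 (not_lt.mpr h3)
  intro p hp q hq hne
  rcases le_total p.1 q.1 with h | h
  · exact main p hp q hq hne h
  · exact (main q hq p hp hne.symm h).symm

lemma weak_type (hw : Measurable w) (hf : Measurable f) :
    lam * ∫⁻ x in {x | lam < dyadicMaximal μ f x}, w x ∂μ
      ≤ ∫⁻ x, f x * dyadicMaximal μ w x ∂μ := by
  set ν := μ.withDensity w with hν
  set ρ := μ.withDensity (fun x => f x * dyadicMaximal μ w x) with hρ
  have hmeas_fw : Measurable (fun x => f x * dyadicMaximal μ w x) :=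
    hf.mul (measurable_dyadicMaximal μ w)
  -- step 1 : for each N, lam * ν (Eset N) ≤ ρ univ
  have step1 : ∀ N : ℤ, lam * ν (Eset μ f lam N) ≤ ρ Set.univ := by
    intro N
    have hcount : (Sel μ f lam N).Countable := Set.to_countable _
    have hcover : ν (Eset μ f lam N) ≤ ∑' p : Sel μ f lam N, ν (dyadicInterval p.1.1 p.1.2) := by
      rw [Eset_eq_biUnion_sel]
      exact measure_biUnion_le ν hcount _
    have hdisj : ρ (Eset μ f lam N) = ∑' p : Sel μ f lam N, ρ (dyadicInterval p.1.1 p.1.2) := by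
      rw [Eset_eq_biUnion_sel]
      exact measure_biUnion hcount (sel_pairwiseDisjoint μ f lam N)
        (fun p _ => measurableSet_dyadic p.1 p.2)
    calc lam * ν (Eset μ f lam N)
        ≤ lam * ∑' p : Sel μ f lam N, ν (dyadicInterval p.1.1 p.1.2) :=
          mul_le_mul_right hcover _
      _ = ∑' p : Sel μ f lam N, lam * ν (dyadicInterval p.1.1 p.1.2) :=
          ENNReal.tsum_mul_left.symm
      _ ≤ ∑' p : Sel μ f lam N, ρ (dyadicInterval p.1.1 p.1.2) := by
          apply ENNReal.tsum_le_tsum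
          rintro ⟨⟨n, k⟩, hp⟩
          rw [hν, hρ, withDensity_apply _ (measurableSet_dyadic n k),
            withDensity_apply _ (measurableSet_dyadic n k)]
          exact key_interval μ w f lam hf hp.2.1
      _ = ρ (Eset μ f lam N) := hdisj.symm
      _ ≤ ρ Set.univ := measure_mono (Set.subset_univ _)
  -- step 2 : the superlevel set is the increasing union of the Eset N
  have hunion : {x | lam < dyadicMaximal μ f x} = ⋃ N : ℤ, Eset μ f lam N := by
    ext x
    simp only [Set.mem_setOf_eq, Set.mem_iUnion, lt_dyadicMaximal_iff, Eset]
    constructor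
    · rintro ⟨n, k, hx, havg⟩
      exact ⟨n, n, k, ⟨le_refl n, havg⟩, hx⟩
    · rintro ⟨N, n, k, ⟨_, havg⟩, hx⟩
      exact ⟨n, k, hx, havg⟩
  have hmono : Monotone (Eset μ f lam) := by
    intro N M hNM x hx
    simp only [Eset, Set.mem_iUnion] at hx ⊢
    obtain ⟨n, k, ⟨h1, h2⟩, hx⟩ := hx
    exact ⟨n, k, ⟨h1.trans hNM, h2⟩, hx⟩
  have hcontin : ν {x | lam < dyadicMaximal μ f x} = ⨆ N : ℤ, ν (Eset μ f lam N) := by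
    rw [hunion]
    exact Directed.measure_iUnion (hmono.directed_le)
  have hset : MeasurableSet {x | lam < dyadicMaximal μ f x} :=
    measurableSet_lt measurable_const (measurable_dyadicMaximal μ f)
  calc lam * ∫⁻ x in {x | lam < dyadicMaximal μ f x}, w x ∂μ
      = lam * ν {x | lam < dyadicMaximal μ f x} := by
        rw [hν, withDensity_apply _ hset]
    _ = ⨆ N : ℤ, lam * ν (Eset μ f lam N) := by rw [hcontin, ENNReal.mul_iSup]
    _ ≤ ρ Set.univ := iSup_le step1
    _ = ∫⁻ x, f x * dyadicMaximal μ w x ∂μ := by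
        rw [hρ, withDensity_apply _ MeasurableSet.univ, Measure.restrict_univ]

end
variable {q : ℝ}

noncomputable def D (j : ℤ) : ℝ≥0∞ := (2:ℝ≥0∞) ^ (j : ℝ)

lemma D_eq_zpow (j : ℤ) : D j = (2:ℝ≥0∞) ^ j := ENNReal.rpow_intCast 2 j

lemma D_ne_zero (j : ℤ) : D j ≠ 0 := by
  rw [D_eq_zpow]
  exact ENNReal.zpow_pos (by norm_num) (by norm_num) j |>.ne'

lemma D_ne_top (j : ℤ) : D j ≠ ⊤ := by
  rw [D_eq_zpow]
  exact (ENNReal.zpow_lt_top (by norm_num) (by norm_num) j).ne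

lemma D_add_self (j : ℤ) : D j + D j = D (j + 1) := by
  rw [D, D, ← two_mul]
  push_cast
  rw [ENNReal.rpow_add _ _ (by norm_num) (by norm_num), ENNReal.rpow_one, mul_comm]

lemma one_le_D {j : ℤ} (hj : 0 ≤ j) : 1 ≤ D j := by
  calc (1:ℝ≥0∞) = 2 ^ (0:ℝ) := (ENNReal.rpow_zero (x := 2)).symm
    _ ≤ D j := ENNReal.rpow_le_rpow_of_exponent_le (by norm_num) (by exact_mod_cast hj)

/-- pointwise layer-cake bound. -/
lemma layer_bound (hq : 1 < q) (t : ℝ≥0∞) :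
    t ^ q ≤ ∑' j : ℤ, (if D j < t then D (j + 1) ^ q else 0) := by
  rcases eq_or_ne t 0 with rfl | ht0
  · simp [ENNReal.zero_rpow_of_pos (by linarith : (0:ℝ) < q)]
  rcases eq_or_ne t ⊤ with rfl | httop
  · -- every layer contributes; sum over nonnegative j already infinite
    refine le_top.trans (le_of_eq ?_)
    symm
    rw [eq_top_iff]
    calc (⊤:ℝ≥0∞) = ∑' _ : ℕ, (1:ℝ≥0∞) :=
          (ENNReal.tsum_const_eq_top_of_ne_zero one_ne_zero).symm
      _ ≤ ∑' n : ℕ, (if D (n:ℤ) < ⊤ then D ((n:ℤ) + 1) ^ q else 0) := by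
          apply ENNReal.tsum_le_tsum
          intro n
          rw [if_pos ((D_ne_top _).lt_top)]
          calc (1:ℝ≥0∞) = 1 ^ q := (ENNReal.one_rpow q).symm
            _ ≤ D ((n:ℤ) + 1) ^ q :=
              ENNReal.rpow_le_rpow (one_le_D (by positivity)) (by linarith)
      _ ≤ ∑' j : ℤ, (if D j < ⊤ then D (j + 1) ^ q else 0) :=
          ENNReal.tsum_comp_le_tsum_of_injective (fun a b h => by simpa using h : Function.Injective (fun n : ℕ => (n:ℤ))) _
  · obtain ⟨n, hn1, hn2⟩ := ENNReal.exists_mem_Ioc_zpow (y := 2) ht0 httop (by norm_num) (by norm_num)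
    have : t ^ q ≤ D (n + 1) ^ q := by
      apply ENNReal.rpow_le_rpow _ (by linarith)
      rw [D_eq_zpow]; exact hn2
    refine this.trans ?_
    have := ENNReal.le_tsum (f := fun j : ℤ => if D j < t then D (j + 1) ^ q else 0) n
    rwa [if_pos (by rw [D_eq_zpow]; exact hn1)] at this



noncomputable def K (q : ℝ) : ℝ≥0∞ := (1 - (2:ℝ≥0∞) ^ (1 - q))⁻¹

lemma K_ne_top (hq : 1 < q) : K q ≠ ⊤ := by
  rw [K, ENNReal.inv_ne_top]
  have hlt : (2:ℝ≥0∞) ^ (1 - q) < 1 :=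
    ENNReal.rpow_lt_one_of_one_lt_of_neg (by norm_num) (by linarith)
  simp only [ne_eq, tsub_eq_zero_iff_le, not_le]
  exact hlt

lemma geom_sum_bound (hq : 1 < q) {t : ℝ≥0∞} (ht0 : t ≠ 0) (httop : t ≠ ⊤) :
    ∑' i : ℤ, (if D i < t then (2:ℝ≥0∞) ^ ((i:ℝ) * (q-1)) else 0)
      ≤ t ^ (q-1) * K q := by
  obtain ⟨J, hJ1, hJ2⟩ := ENNReal.exists_mem_Ioc_zpow (y := 2) ht0 httop (by norm_num) (by norm_num)
  rw [← D_eq_zpow] at hJ1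
  rw [show (2:ℝ≥0∞) ^ (J+1) = D (J+1) from (D_eq_zpow _).symm] at hJ2
  set r : ℝ≥0∞ := (2:ℝ≥0∞) ^ (1 - q) with hr
  -- termwise domination by a function supported on i ≤ J
  have hterm : ∀ i : ℤ, (if D i < t then (2:ℝ≥0∞) ^ ((i:ℝ) * (q-1)) else 0)
      ≤ (if i ≤ J then (2:ℝ≥0∞) ^ ((i:ℝ) * (q-1)) else 0) := by
    intro i
    by_cases h : D i < t
    · rw [if_pos h, if_pos]
      by_contra hcon
      push_neg at hcon
      have : D (J+1) ≤ D i :=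
        ENNReal.rpow_le_rpow_of_exponent_le (by norm_num) (by exact_mod_cast hcon)
      exact absurd (lt_of_le_of_lt (hJ2.trans this) h) (lt_irrefl t)
    · rw [if_neg h]; exact zero_le
  refine (ENNReal.tsum_le_tsum hterm).trans ?_
  -- reindex i = J - n
  have hre : ∑' i : ℤ, (if i ≤ J then (2:ℝ≥0∞) ^ ((i:ℝ) * (q-1)) else 0)
      = ∑' i : ℤ, (if J - i ≤ J then (2:ℝ≥0∞) ^ (((J - i : ℤ):ℝ) * (q-1)) else 0) :=
    ((Equiv.subLeft J).tsum_eq _).symm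
  rw [hre]
  have hsplit := tsum_of_nat_of_neg_add_one
    (f := fun i : ℤ => if J - i ≤ J then (2:ℝ≥0∞) ^ (((J - i : ℤ):ℝ) * (q-1)) else 0)
    ENNReal.summable ENNReal.summable
  rw [hsplit]
  have hneg : ∑' n : ℕ, (if J - (-(n+1) : ℤ) ≤ J then
      (2:ℝ≥0∞) ^ (((J - (-(n+1):ℤ) : ℤ):ℝ) * (q-1)) else 0) = 0 := by
    rw [ENNReal.tsum_eq_zero]
    intro n
    rw [if_neg (by omega)]
  rw [hneg, add_zero]
  have hpos : ∀ n : ℕ, (if J - (n:ℤ) ≤ J then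
      (2:ℝ≥0∞) ^ (((J - (n:ℤ) : ℤ):ℝ) * (q-1)) else 0)
      = (2:ℝ≥0∞) ^ ((J:ℝ) * (q-1)) * r ^ n := by
    intro n
    rw [if_pos (by omega)]
    rw [hr, ← ENNReal.rpow_natCast ((2:ℝ≥0∞) ^ (1-q)) n, ← ENNReal.rpow_mul]
    rw [← ENNReal.rpow_add _ _ (by norm_num) (by norm_num)]
    congr 1
    push_cast
    ring
  calc ∑' n : ℕ, (if J - (n:ℤ) ≤ J then (2:ℝ≥0∞) ^ (((J - (n:ℤ) : ℤ):ℝ) * (q-1)) else 0)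
      = ∑' n : ℕ, (2:ℝ≥0∞) ^ ((J:ℝ) * (q-1)) * r ^ n := by
        exact tsum_congr hpos
    _ = (2:ℝ≥0∞) ^ ((J:ℝ) * (q-1)) * (1 - r)⁻¹ := by
        rw [ENNReal.tsum_mul_left, ENNReal.tsum_geometric]
    _ ≤ t ^ (q-1) * K q := by
        apply mul_le_mul_left
        calc (2:ℝ≥0∞) ^ ((J:ℝ) * (q-1)) = (D J) ^ (q-1) := by
              rw [D, ← ENNReal.rpow_mul]
          _ ≤ t ^ (q-1) := ENNReal.rpow_le_rpow hJ1.le (by linarith)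


section
variable (μ : Measure ℝ) [IsLocallyFiniteMeasure μ]

lemma inv_mul_mul_le (a c : ℝ≥0∞) : a⁻¹ * (c * a) ≤ c := by
  rcases eq_or_ne a 0 with rfl | ha0
  · simp
  rcases eq_or_ne a ⊤ with rfl | hatop
  · simp
  · rw [mul_comm c a, ← mul_assoc, ENNReal.inv_mul_cancel ha0 hatop, one_mul]

lemma avg_mono_add (g g1 : ℝ → ℝ≥0∞) (c : ℝ≥0∞) (hle : ∀ x, g x ≤ g1 x + c) (n k : ℤ) :
    avg μ g n k ≤ avg μ g1 n k + c := by
  rw [avg, avg]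
  set I := dyadicInterval n k
  calc (μ I)⁻¹ * ∫⁻ y in I, g y ∂μ
      ≤ (μ I)⁻¹ * ∫⁻ y in I, (g1 y + c) ∂μ :=
        mul_le_mul_right (lintegral_mono hle) _
    _ ≤ (μ I)⁻¹ * ((∫⁻ y in I, g1 y ∂μ) + c * μ I) := by
        apply mul_le_mul_right
        rw [lintegral_add_right' _ aemeasurable_const]
        simp [Measure.restrict_apply MeasurableSet.univ]
    _ = (μ I)⁻¹ * (∫⁻ y in I, g1 y ∂μ) + (μ I)⁻¹ * (c * μ I) := by
        rw [mul_add]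
    _ ≤ (μ I)⁻¹ * (∫⁻ y in I, g1 y ∂μ) + c :=
        add_le_add_right (inv_mul_mul_le _ _) _

/-- truncation + weak type. -/
lemma trunc_weak (w g : ℝ → ℝ≥0∞) (hw : Measurable w) (hg : Measurable g) (j : ℤ) :
    ∫⁻ x in {x | D j < dyadicMaximal μ g x}, w x ∂μ
      ≤ (D (j-1))⁻¹ * ∫⁻ x, (if D (j-1) < g x then g x * dyadicMaximal μ w x else 0) ∂μ := by
  set g1 : ℝ → ℝ≥0∞ := fun x => if D (j-1) < g x then g x else 0 with hg1
  have hg1m : Measurable g1 :=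
    Measurable.ite (measurableSet_lt measurable_const hg) hg measurable_const
  have hsub : {x | D j < dyadicMaximal μ g x} ⊆ {x | D (j-1) < dyadicMaximal μ g1 x} := by
    intro x hx
    simp only [Set.mem_setOf_eq] at hx ⊢
    obtain ⟨n, k, hxI, havg⟩ := (lt_dyadicMaximal_iff μ g).mp hx
    have hle : ∀ y, g y ≤ g1 y + D (j-1) := by
      intro y
      by_cases h : D (j-1) < g y
      · simp only [hg1, if_pos h]; exact le_self_add
      · simp only [hg1, if_neg h]; push_neg at h; simpa using h
    have h1 : avg μ g n k ≤ avg μ g1 n k + D (j-1) := avg_mono_add μ g g1 _ hle n k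
    have h2 : D (j-1) < avg μ g1 n k := by
      by_contra hcon
      push_neg at hcon
      have : avg μ g n k ≤ D j := by
        calc avg μ g n k ≤ avg μ g1 n k + D (j-1) := h1
          _ ≤ D (j-1) + D (j-1) := add_le_add_left hcon _
          _ = D j := by rw [D_add_self (j-1)]; norm_num
      exact absurd havg (not_lt.mpr this)
    exact (lt_dyadicMaximal_iff μ g1).mpr ⟨n, k, hxI, h2⟩
  have hmono : ∫⁻ x in {x | D j < dyadicMaximal μ g x}, w x ∂μ
      ≤ ∫⁻ x in {x | D (j-1) < dyadicMaximal μ g1 x}, w x ∂μ :=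
    lintegral_mono' (Measure.restrict_mono hsub le_rfl) le_rfl
  have hweak := weak_type μ w g1 (D (j-1)) hw hg1m
  have hg1eq : ∀ x, g1 x * dyadicMaximal μ w x
      = (if D (j-1) < g x then g x * dyadicMaximal μ w x else 0) := by
    intro x
    by_cases h : D (j-1) < g x
    · simp only [hg1, if_pos h]
    · simp only [hg1, if_neg h, zero_mul]
  calc ∫⁻ x in {x | D j < dyadicMaximal μ g x}, w x ∂μ
      = (D (j-1))⁻¹ * (D (j-1) * ∫⁻ x in {x | D j < dyadicMaximal μ g x}, w x ∂μ) := by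
        rw [← mul_assoc, ENNReal.inv_mul_cancel (D_ne_zero _) (D_ne_top _), one_mul]
    _ ≤ (D (j-1))⁻¹ * (D (j-1) * ∫⁻ x in {x | D (j-1) < dyadicMaximal μ g1 x}, w x ∂μ) :=
        mul_le_mul_right (mul_le_mul_right hmono _) _
    _ ≤ (D (j-1))⁻¹ * ∫⁻ x, g1 x * dyadicMaximal μ w x ∂μ :=
        mul_le_mul_right hweak _
    _ = (D (j-1))⁻¹ * ∫⁻ x, (if D (j-1) < g x then g x * dyadicMaximal μ w x else 0) ∂μ := by
        congr 1
        exact lintegral_congr hg1eq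

end
end FS

namespace Final
open FS

lemma coeff_eq {q : ℝ} (j : ℤ) :
    D (j+1) ^ q * (D (j-1))⁻¹
      = (2:ℝ≥0∞) ^ (2*q) * (2:ℝ≥0∞) ^ (((j-1:ℤ):ℝ) * (q-1)) := by
  rw [D, D, ← ENNReal.rpow_mul, ← ENNReal.rpow_neg,
    ← ENNReal.rpow_add _ _ (by norm_num) (by norm_num),
    ← ENNReal.rpow_add _ _ (by norm_num) (by norm_num)]
  congr 1
  push_cast
  ring

lemma final_sum {q : ℝ} (hq : 1 < q) {t s : ℝ≥0∞} (ht : t ≠ ⊤) :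
    ∑' j : ℤ, (D (j+1) ^ q * (D (j-1))⁻¹) * (if D (j-1) < t then t * s else 0)
      ≤ (2:ℝ≥0∞) ^ (2*q) * K q * (t ^ q * s) := by
  rcases eq_or_ne t 0 with rfl | ht0
  · have : ∀ j : ℤ, (D (j+1) ^ q * (D (j-1))⁻¹) * (if D (j-1) < 0 then (0:ℝ≥0∞) * s else 0) = 0 := by
      intro j
      rw [if_neg (by simp), mul_zero]
    rw [tsum_congr this, tsum_zero]
    exact zero_le
  have hterm : ∀ j : ℤ,
      (D (j+1) ^ q * (D (j-1))⁻¹) * (if D (j-1) < t then t * s else 0)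
      = (2:ℝ≥0∞) ^ (2*q) * ((if D (j-1) < t then (2:ℝ≥0∞) ^ (((j-1:ℤ):ℝ) * (q-1)) else 0) * (t * s)) := by
    intro j
    by_cases h : D (j-1) < t
    · rw [if_pos h, if_pos h, coeff_eq]; ring
    · rw [if_neg h, if_neg h]; simp
  rw [tsum_congr hterm, ENNReal.tsum_mul_left]
  have hre : ∑' j : ℤ, ((if D (j-1) < t then (2:ℝ≥0∞) ^ (((j-1:ℤ):ℝ) * (q-1)) else 0) * (t * s))
      = ∑' i : ℤ, ((if D i < t then (2:ℝ≥0∞) ^ ((i:ℝ) * (q-1)) else 0) * (t * s)) := by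
    rw [← Equiv.tsum_eq (Equiv.addRight (1:ℤ))
      (fun j => (if D (j-1) < t then (2:ℝ≥0∞) ^ (((j-1:ℤ):ℝ) * (q-1)) else 0) * (t * s))]
    apply tsum_congr
    intro i
    simp only [Equiv.coe_addRight, add_sub_cancel_right]
  rw [hre, ENNReal.tsum_mul_right]
  calc (2:ℝ≥0∞) ^ (2*q) * ((∑' i : ℤ, (if D i < t then (2:ℝ≥0∞) ^ ((i:ℝ) * (q-1)) else 0)) * (t * s))
      ≤ (2:ℝ≥0∞) ^ (2*q) * ((t ^ (q-1) * K q) * (t * s)) :=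
        mul_le_mul_right (mul_le_mul_left (geom_sum_bound hq ht0 ht) _) _
    _ = (2:ℝ≥0∞) ^ (2*q) * K q * ((t ^ (q-1) * t) * s) := by ring
    _ = (2:ℝ≥0∞) ^ (2*q) * K q * (t ^ q * s) := by
        have hpow : t ^ (q-1) * t = t ^ q := by
          nth_rewrite 2 [← ENNReal.rpow_one t]
          rw [← ENNReal.rpow_add _ _ ht0 ht]
          norm_num
        rw [hpow]

end Final

open FS Final in
theorem stmt7 (q : ℝ) (hq : 1 < q) :
    ∃ C : ℝ≥0∞, C ≠ ⊤ ∧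
      ∀ (μ : Measure ℝ), IsLocallyFiniteMeasure μ →
        ∀ (w : ℝ → ℝ≥0∞), Measurable w →
          ∀ (f : ℝ → ℝ), Measurable f →
            ∫⁻ x, (dyadicMaximal μ (fun y => ENNReal.ofReal |f y|) x) ^ q * w x ∂μ
              ≤ C * ∫⁻ x, (ENNReal.ofReal |f x|) ^ q * dyadicMaximal μ w x ∂μ := by
  refine ⟨(2:ℝ≥0∞) ^ (2*q) * K q, ?_, ?_⟩
  · exact ENNReal.mul_ne_top
      (ENNReal.rpow_lt_top_of_nonneg (by linarith) (by norm_num)).ne (K_ne_top hq)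
  intro μ hμ w hw f hf
  haveI := hμ
  set g : ℝ → ℝ≥0∞ := fun y => ENNReal.ofReal |f y| with hgdef
  have hg : Measurable g := ENNReal.measurable_ofReal.comp hf.abs
  set Mg := dyadicMaximal μ g with hMgdef
  set Mw := dyadicMaximal μ w with hMwdef
  have hMg : Measurable Mg := measurable_dyadicMaximal μ g
  have hMw : Measurable Mw := measurable_dyadicMaximal μ w
  have hgtop : ∀ x, g x ≠ ⊤ := fun x => ENNReal.ofReal_ne_top
  have hsetm : ∀ j : ℤ, MeasurableSet {x | D j < Mg x} :=
    fun j => measurableSet_lt measurable_const hMg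
  have hsetg : ∀ j : ℤ, MeasurableSet {x | D j < g x} :=
    fun j => measurableSet_lt measurable_const hg
  -- layer decomposition
  have h1 : ∫⁻ x, Mg x ^ q * w x ∂μ
      ≤ ∑' j : ℤ, ∫⁻ x, (if D j < Mg x then D (j+1) ^ q else 0) * w x ∂μ := by
    calc ∫⁻ x, Mg x ^ q * w x ∂μ
        ≤ ∫⁻ x, (∑' j : ℤ, (if D j < Mg x then D (j+1) ^ q else 0)) * w x ∂μ :=
          lintegral_mono fun x => mul_le_mul_left (layer_bound hq _) _
      _ = ∫⁻ x, ∑' j : ℤ, (if D j < Mg x then D (j+1) ^ q else 0) * w x ∂μ := by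
          apply lintegral_congr
          intro x
          rw [ENNReal.tsum_mul_right]
      _ = ∑' j : ℤ, ∫⁻ x, (if D j < Mg x then D (j+1) ^ q else 0) * w x ∂μ :=
          lintegral_tsum fun j =>
            ((Measurable.ite (hsetm j) measurable_const measurable_const).mul hw).aemeasurable
  -- each layer via indicator
  have h2 : ∀ j : ℤ, ∫⁻ x, (if D j < Mg x then D (j+1) ^ q else 0) * w x ∂μ
      = D (j+1) ^ q * ∫⁻ x in {x | D j < Mg x}, w x ∂μ := by
    intro j
    calc ∫⁻ x, (if D j < Mg x then D (j+1) ^ q else 0) * w x ∂μ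
        = ∫⁻ x, {x | D j < Mg x}.indicator (fun x => D (j+1) ^ q * w x) x ∂μ := by
          apply lintegral_congr
          intro x
          by_cases h : D j < Mg x
          · simp [Set.indicator_apply, Set.mem_setOf_eq, h]
          · simp [Set.indicator_apply, Set.mem_setOf_eq, h]
      _ = ∫⁻ x in {x | D j < Mg x}, D (j+1) ^ q * w x ∂μ :=
          lintegral_indicator (hsetm j) _
      _ = D (j+1) ^ q * ∫⁻ x in {x | D j < Mg x}, w x ∂μ :=
          lintegral_const_mul _ hw
  -- weak type with truncation for each layer
  have h3 : ∀ j : ℤ, D (j+1) ^ q * ∫⁻ x in {x | D j < Mg x}, w x ∂μ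
      ≤ (D (j+1) ^ q * (D (j-1))⁻¹) * ∫⁻ x, (if D (j-1) < g x then g x * Mw x else 0) ∂μ := by
    intro j
    rw [mul_assoc]
    exact mul_le_mul_right (trunc_weak μ w g hw hg j) _
  -- swap sum and integral back, apply the pointwise geometric bound
  have h4 : ∑' j : ℤ, (D (j+1) ^ q * (D (j-1))⁻¹)
        * ∫⁻ x, (if D (j-1) < g x then g x * Mw x else 0) ∂μ
      ≤ (2:ℝ≥0∞) ^ (2*q) * K q * ∫⁻ x, g x ^ q * Mw x ∂μ := by
    calc ∑' j : ℤ, (D (j+1) ^ q * (D (j-1))⁻¹)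
          * ∫⁻ x, (if D (j-1) < g x then g x * Mw x else 0) ∂μ
        = ∑' j : ℤ, ∫⁻ x, (D (j+1) ^ q * (D (j-1))⁻¹)
            * (if D (j-1) < g x then g x * Mw x else 0) ∂μ := by
          apply tsum_congr
          intro j
          exact (lintegral_const_mul _
            (Measurable.ite (hsetg (j-1)) (hg.mul hMw) measurable_const)).symm
      _ = ∫⁻ x, ∑' j : ℤ, (D (j+1) ^ q * (D (j-1))⁻¹)
            * (if D (j-1) < g x then g x * Mw x else 0) ∂μ :=
          (lintegral_tsum fun j => ((Measurable.ite (hsetg (j-1)) (hg.mul hMw)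
            measurable_const).const_mul _).aemeasurable).symm
      _ ≤ ∫⁻ x, (2:ℝ≥0∞) ^ (2*q) * K q * (g x ^ q * Mw x) ∂μ :=
          lintegral_mono fun x => final_sum hq (hgtop x)
      _ = (2:ℝ≥0∞) ^ (2*q) * K q * ∫⁻ x, g x ^ q * Mw x ∂μ :=
          lintegral_const_mul _ ((hg.pow_const _).mul hMw)
  calc ∫⁻ x, Mg x ^ q * w x ∂μ
      ≤ ∑' j : ℤ, ∫⁻ x, (if D j < Mg x then D (j+1) ^ q else 0) * w x ∂μ := h1
    _ = ∑' j : ℤ, D (j+1) ^ q * ∫⁻ x in {x | D j < Mg x}, w x ∂μ := tsum_congr h2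
    _ ≤ ∑' j : ℤ, (D (j+1) ^ q * (D (j-1))⁻¹)
          * ∫⁻ x, (if D (j-1) < g x then g x * Mw x else 0) ∂μ :=
        ENNReal.tsum_le_tsum h3
    _ ≤ (2:ℝ≥0∞) ^ (2*q) * K q * ∫⁻ x, g x ^ q * Mw x ∂μ := h4
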